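/- Let r, s, t, p, q be integers with r² + s² = t² and rs even. Then every 2×2 matrix whose four entries are pqt + p² + q²rs/2, pqt + p² − q²rs/2, pqt − p² + q²rs/2, pqt − p² − q²rs/2 in some order has integer eigenvalues. -/
import Mathlib


/-- A 2×2 integer matrix has integer eigenvalues if its characteristic polynomial
splits over ℤ, i.e. there are integers λ₁, λ₂ with λ₁ + λ₂ = trace M and λ₁·λ₂ = det M. -/
def hasIntEigenvalues (M : Matrix (Fin 2) (Fin 2) ℤ) : Prop :=
  ∃ lam1 lam2 : ℤ, lam1 + lam2 = Matrix.trace M ∧ lam1 * lam2 = Matrix.det M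

/-- The multiset of entries of a 2×2 integer matrix. -/
def entriesMultiset (M : Matrix (Fin 2) (Fin 2) ℤ) : Multiset ℤ :=
  {M 0 0, M 0 1, M 1 0, M 1 1}

lemma eq2' {a b y z : ℤ} (h : ({a, b} : Multiset ℤ) = {y, z}) :
    (a = y ∧ b = z) ∨ (a = z ∧ b = y) := by
  have ha : a = y ∨ a = z := by
    have : a ∈ ({y, z} : Multiset ℤ) := by rw [← h]; simp
    simpa using this
  rcases ha with ha | ha
  · subst ha
    refine Or.inl ⟨rfl, ?_⟩
    have := (Multiset.cons_inj_right a).mp h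
    simpa using this
  · subst ha
    refine Or.inr ⟨rfl, ?_⟩
    rw [show ({y, a} : Multiset ℤ) = {a, y} from by
      show y ::ₘ a ::ₘ 0 = a ::ₘ y ::ₘ 0; rw [Multiset.cons_swap]] at h
    have := (Multiset.cons_inj_right a).mp h
    simpa using this

lemma eq3' {a b c x y z : ℤ} (h : ({a, b, c} : Multiset ℤ) = {x, y, z}) :
    (a = x ∧ ((b = y ∧ c = z) ∨ (b = z ∧ c = y))) ∨
    (a = y ∧ ((b = x ∧ c = z) ∨ (b = z ∧ c = x))) ∨
    (a = z ∧ ((b = x ∧ c = y) ∨ (b = y ∧ c = x))) := by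
  have ha : a = x ∨ a = y ∨ a = z := by
    have : a ∈ ({x, y, z} : Multiset ℤ) := by rw [← h]; simp
    simpa using this
  rcases ha with ha | ha | ha
  · subst ha
    exact Or.inl ⟨rfl, eq2' ((Multiset.cons_inj_right a).mp h)⟩
  · subst ha
    rw [show ({x, a, z} : Multiset ℤ) = {a, x, z} from by
      show x ::ₘ a ::ₘ z ::ₘ 0 = a ::ₘ x ::ₘ z ::ₘ 0
      rw [Multiset.cons_swap x a]] at h
    exact Or.inr (Or.inl ⟨rfl, eq2' ((Multiset.cons_inj_right a).mp h)⟩)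
  · subst ha
    rw [show ({x, y, a} : Multiset ℤ) = {a, x, y} from by
      show x ::ₘ y ::ₘ a ::ₘ 0 = a ::ₘ x ::ₘ y ::ₘ 0
      rw [Multiset.cons_swap y a, Multiset.cons_swap x a]] at h
    exact Or.inr (Or.inr ⟨rfl, eq2' ((Multiset.cons_inj_right a).mp h)⟩)

lemma eq4' {a b c d w x y z : ℤ} (h : ({a, b, c, d} : Multiset ℤ) = {w, x, y, z}) :
    (a = w ∧ ((b = x ∧ ((c = y ∧ d = z) ∨ (c = z ∧ d = y))) ∨
              (b = y ∧ ((c = x ∧ d = z) ∨ (c = z ∧ d = x))) ∨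
              (b = z ∧ ((c = x ∧ d = y) ∨ (c = y ∧ d = x))))) ∨
    (a = x ∧ ((b = w ∧ ((c = y ∧ d = z) ∨ (c = z ∧ d = y))) ∨
              (b = y ∧ ((c = w ∧ d = z) ∨ (c = z ∧ d = w))) ∨
              (b = z ∧ ((c = w ∧ d = y) ∨ (c = y ∧ d = w))))) ∨
    (a = y ∧ ((b = w ∧ ((c = x ∧ d = z) ∨ (c = z ∧ d = x))) ∨
              (b = x ∧ ((c = w ∧ d = z) ∨ (c = z ∧ d = w))) ∨
              (b = z ∧ ((c = w ∧ d = x) ∨ (c = x ∧ d = w))))) ∨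
    (a = z ∧ ((b = w ∧ ((c = x ∧ d = y) ∨ (c = y ∧ d = x))) ∨
              (b = x ∧ ((c = w ∧ d = y) ∨ (c = y ∧ d = w))) ∨
              (b = y ∧ ((c = w ∧ d = x) ∨ (c = x ∧ d = w))))) := by
  have ha : a = w ∨ a = x ∨ a = y ∨ a = z := by
    have : a ∈ ({w, x, y, z} : Multiset ℤ) := by rw [← h]; simp
    simpa using this
  rcases ha with ha | ha | ha | ha
  · subst ha
    exact Or.inl ⟨rfl, eq3' ((Multiset.cons_inj_right a).mp h)⟩
  · subst ha
    rw [show ({w, a, y, z} : Multiset ℤ) = {a, w, y, z} from by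
      show w ::ₘ a ::ₘ y ::ₘ z ::ₘ 0 = a ::ₘ w ::ₘ y ::ₘ z ::ₘ 0
      rw [Multiset.cons_swap w a]] at h
    exact Or.inr (Or.inl ⟨rfl, eq3' ((Multiset.cons_inj_right a).mp h)⟩)
  · subst ha
    rw [show ({w, x, a, z} : Multiset ℤ) = {a, w, x, z} from by
      show w ::ₘ x ::ₘ a ::ₘ z ::ₘ 0 = a ::ₘ w ::ₘ x ::ₘ z ::ₘ 0
      rw [Multiset.cons_swap x a, Multiset.cons_swap w a]] at h
    exact Or.inr (Or.inr (Or.inl ⟨rfl, eq3' ((Multiset.cons_inj_right a).mp h)⟩))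
  · subst ha
    rw [show ({w, x, y, a} : Multiset ℤ) = {a, w, x, y} from by
      show w ::ₘ x ::ₘ y ::ₘ a ::ₘ 0 = a ::ₘ w ::ₘ x ::ₘ y ::ₘ 0
      rw [Multiset.cons_swap y a, Multiset.cons_swap x a, Multiset.cons_swap w a]] at h
    exact Or.inr (Or.inr (Or.inr ⟨rfl, eq3' ((Multiset.cons_inj_right a).mp h)⟩))

/-- For a Pythagorean triple (r,s,t) with rs even and any integers p, q, every
2×2 matrix whose entries are pqt ± p² ± q²rs/2 in some order has integer
eigenvalues. -/
theorem stmt_14 (r s t p q : ℤ) (hpy : r ^ 2 + s ^ 2 = t ^ 2) (hev : 2 ∣ r * s) :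
    ∀ M : Matrix (Fin 2) (Fin 2) ℤ,
      entriesMultiset M =
        {p * q * t + p ^ 2 + q ^ 2 * (r * s / 2),
         p * q * t + p ^ 2 - q ^ 2 * (r * s / 2),
         p * q * t - p ^ 2 + q ^ 2 * (r * s / 2),
         p * q * t - p ^ 2 - q ^ 2 * (r * s / 2)} →
      hasIntEigenvalues M := by
  intro M hM
  have hD : 2 * (r * s / 2) = r * s := by
    have := Int.ediv_mul_cancel hev
    linarith
  simp only [entriesMultiset] at hM
  simp only [hasIntEigenvalues, Matrix.trace_fin_two, Matrix.det_fin_two]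
  rcases eq4' hM with
      ⟨ha, ⟨hb, ⟨hc, hd⟩ | ⟨hc, hd⟩⟩ | ⟨hb, ⟨hc, hd⟩ | ⟨hc, hd⟩⟩ | ⟨hb, ⟨hc, hd⟩ | ⟨hc, hd⟩⟩⟩ |
      ⟨ha, ⟨hb, ⟨hc, hd⟩ | ⟨hc, hd⟩⟩ | ⟨hb, ⟨hc, hd⟩ | ⟨hc, hd⟩⟩ | ⟨hb, ⟨hc, hd⟩ | ⟨hc, hd⟩⟩⟩ |
      ⟨ha, ⟨hb, ⟨hc, hd⟩ | ⟨hc, hd⟩⟩ | ⟨hb, ⟨hc, hd⟩ | ⟨hc, hd⟩⟩ | ⟨hb, ⟨hc, hd⟩ | ⟨hc, hd⟩⟩⟩ |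
      ⟨ha, ⟨hb, ⟨hc, hd⟩ | ⟨hc, hd⟩⟩ | ⟨hb, ⟨hc, hd⟩ | ⟨hc, hd⟩⟩ | ⟨hb, ⟨hc, hd⟩ | ⟨hc, hd⟩⟩⟩ <;>
    first
      | (refine ⟨p * q * t + p * q * (r + s), p * q * t - p * q * (r + s), ?_, ?_⟩ <;>
          simp only [ha, hb, hc, hd] <;>
          first
            | ring1
            | linear_combination (-(p ^ 2 * q ^ 2)) * hpy + 2 * p ^ 2 * q ^ 2 * hD)
      | (refine ⟨p * q * t + p * q * (r - s), p * q * t - p * q * (r - s), ?_, ?_⟩ <;>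
          simp only [ha, hb, hc, hd] <;>
          first
            | ring1
            | linear_combination (-(p ^ 2 * q ^ 2)) * hpy - 2 * p ^ 2 * q ^ 2 * hD)
      | (refine ⟨2 * (p * q * t), 2 * (q ^ 2 * (r * s / 2)), ?_, ?_⟩ <;>
          simp only [ha, hb, hc, hd] <;> ring1)
      | (refine ⟨2 * (p * q * t), -(2 * (q ^ 2 * (r * s / 2))), ?_, ?_⟩ <;>
          simp only [ha, hb, hc, hd] <;> ring1)
      | (refine ⟨2 * (p * q * t), 2 * p ^ 2, ?_, ?_⟩ <;>
          simp only [ha, hb, hc, hd] <;> ring1)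
      | (refine ⟨2 * (p * q * t), -(2 * p ^ 2), ?_, ?_⟩ <;>
          simp only [ha, hb, hc, hd] <;> ring1)
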